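/- Let G be a finite group and let U_1, U_2, U_3 be subgroups of G with [G:U_1] = 2r_1 and [G:U_i] = 4r_i for i = 2, 3, where r_1, r_2, r_3 are pairwise coprime positive integers and r_1 is odd. Assume the triple (U_1, U_2, U_3) is harmonic. Then: (1) α(U_2, U_3) ≠ 2; and (2) if α(U_2, U_3) = 3, then 3 divides r_1 and |U_2(U_1 ∩ U_3)| = |U_2U_1 ∩ U_2U_3| = |G|/4. -/

import Mathlib

open scoped Pointwise

/-- `alphaIdx A B` is the integer `α(A,B)` satisfying
`[G : A ⊓ B] = lcm([G:A],[G:B]) · α(A,B)`. -/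
noncomputable def alphaIdx {G : Type*} [Group G] (A B : Subgroup G) : ℕ :=
  (A ⊓ B).index / Nat.lcm A.index B.index

section Aux

open MulAction

set_option linter.unusedSectionVars false

variable {G : Type*} [Group G] [Fintype G]

private lemma singleton_mul_coe' (B : Subgroup G) (x : G) :
    ({x} : Set G) * ↑B = x • (B : Set G) := by
  ext y
  simp only [Set.mem_smul_set, Set.mem_mul, Set.mem_singleton_iff, SetLike.mem_coe]
  constructor
  · rintro ⟨u, rfl, v, hv, rfl⟩; exact ⟨v, hv, rfl⟩
  · rintro ⟨v, hv, rfl⟩; exact ⟨x, rfl, v, hv, rfl⟩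

private lemma prodCard' (A B : Subgroup G) (x : G) :
    Nat.card (↑A * (x • ↑B) : Set G) * (A.index * B.index) =
      Nat.card G * (A ⊓ stabilizer G ((QuotientGroup.mk x) : G ⧸ B)).index := by
  set S := stabilizer G ((QuotientGroup.mk x) : G ⧸ B) with hS
  have h1 : (↑A * (x • ↑B) : Set G) = (↑A * ({x} : Set G)) * ↑B := by
    rw [mul_assoc, singleton_mul_coe']
  have h2 : Nat.card (↑A * (x • ↑B) : Set G)
      = Nat.card B * Nat.card (((↑A * ({x} : Set G)).image ((↑) : G → G ⧸ B))) := by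
    rw [h1]; exact Subgroup.card_mul_eq_card_subgroup_mul_card_quotient B _
  have h3 : ((↑A * ({x} : Set G)).image ((↑) : G → G ⧸ B))
      = orbit A ((QuotientGroup.mk x) : G ⧸ B) := by
    ext q
    simp only [Set.mem_image, Set.mem_mul, Set.mem_singleton_iff, mem_orbit_iff, SetLike.mem_coe]
    constructor
    · rintro ⟨g, ⟨u, hu, v, rfl, rfl⟩, rfl⟩
      exact ⟨⟨u, hu⟩, rfl⟩
    · rintro ⟨⟨u, hu⟩, rfl⟩
      exact ⟨u * x, ⟨u, hu, x, rfl, rfl⟩, rfl⟩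
  have h4 : stabilizer A ((QuotientGroup.mk x) : G ⧸ B) = S.subgroupOf A := by
    ext a
    simp only [mem_stabilizer_iff, Subgroup.mem_subgroupOf]
    rfl
  have h5 : Nat.card (((↑A * ({x} : Set G)).image ((↑) : G → G ⧸ B))) * A.index
      = (A ⊓ S).index := by
    rw [h3, Nat.card_congr (orbitEquivQuotientStabilizer A ((QuotientGroup.mk x) : G ⧸ B)), h4]
    have h7 : Nat.card (↥A ⧸ S.subgroupOf A) = (S.subgroupOf A).index := rfl
    rw [h7]
    have h6 : (S.subgroupOf A).index = S.relIndex A := rfl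
    rw [h6, ← Subgroup.inf_relIndex_right S A, inf_comm]
    exact Subgroup.relIndex_mul_index inf_le_left
  calc Nat.card (↑A * (x • ↑B) : Set G) * (A.index * B.index)
      = (Nat.card (((↑A * ({x} : Set G)).image ((↑) : G → G ⧸ B))) * A.index)
        * (Nat.card B * B.index) := by rw [h2]; ring
    _ = Nat.card G * (A ⊓ S).index := by rw [h5, Subgroup.card_mul_index B]; ring

private lemma stab_index' (B : Subgroup G) (x : G) :
    (stabilizer G ((QuotientGroup.mk x) : G ⧸ B)).index = B.index := by
  rw [index_stabilizer_of_transitive]; rfl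

private lemma prodCard1' (A B : Subgroup G) :
    Nat.card (↑A * ↑B : Set G) * (A.index * B.index) = Nat.card G * (A ⊓ B).index := by
  have := prodCard' A B 1
  simpa [stabilizer_quotient] using this

private lemma card_lt_of_not_mem' {T : Set G} {y : G} (h : y ∉ T) :
    Nat.card T < Nat.card G := by
  rw [Nat.card_coe_set_eq, ← Set.ncard_univ G]
  exact Set.ncard_lt_ncard (Set.ssubset_univ_iff.mpr (fun hT => h (hT ▸ Set.mem_univ y)))
    Set.finite_univ

private lemma pin' {c m : ℕ} (hc : c ≠ 0) (hdvd : m ∣ c) (hlt : c < 2 * m) : c = m := by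
  rcases hdvd with ⟨k, rfl⟩
  have : k = 1 := by nlinarith [Nat.pos_of_ne_zero hc]
  simp [this]

private lemma forced' (A B : Subgroup G) (x y : G) (m q : ℕ)
    (hy : y ∉ (↑A * (x • ↑B) : Set G))
    (hdvd : m ∣ (A ⊓ stabilizer G ((QuotientGroup.mk x) : G ⧸ B)).index)
    (hab : A.index * B.index = m * q) (hq : q ≤ 2) :
    (A ⊓ stabilizer G ((QuotientGroup.mk x) : G ⧸ B)).index = m ∧
      q * Nat.card (↑A * (x • ↑B) : Set G) = Nat.card G := by
  set S := stabilizer G ((QuotientGroup.mk x) : G ⧸ B)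
  have hpc := prodCard' A B x
  have hc0 : (A ⊓ S).index ≠ 0 := Subgroup.index_ne_zero_of_finite
  have hA0 : A.index ≠ 0 := Subgroup.index_ne_zero_of_finite
  have hB0 : B.index ≠ 0 := Subgroup.index_ne_zero_of_finite
  have hn : 0 < Nat.card G := Nat.card_pos
  have hab0 : 0 < A.index * B.index := Nat.pos_of_ne_zero (Nat.mul_ne_zero hA0 hB0)
  have hm0 : 0 < m := by
    rcases Nat.eq_zero_or_pos m with h | h
    · rw [h] at hab; simp at hab; omega
    · exact h
  have hlt : Nat.card (↑A * (x • ↑B) : Set G) < Nat.card G := card_lt_of_not_mem' hy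
  have hclt : (A ⊓ S).index < 2 * m := by
    have h1 : Nat.card (↑A * (x • ↑B) : Set G) * (A.index * B.index)
        < Nat.card G * (A.index * B.index) :=
      Nat.mul_lt_mul_of_lt_of_le hlt (le_refl _) hab0
    rw [hpc] at h1
    have h2 : (A ⊓ S).index < A.index * B.index := lt_of_mul_lt_mul_left h1 (Nat.zero_le _)
    calc (A ⊓ S).index < A.index * B.index := h2
      _ = m * q := hab
      _ ≤ m * 2 := Nat.mul_le_mul_left m hq
      _ = 2 * m := by ring
  have hceq : (A ⊓ S).index = m := pin' hc0 hdvd hclt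
  refine ⟨hceq, ?_⟩
  have h3 : Nat.card (↑A * (x • ↑B) : Set G) * (m * q) = Nat.card G * m := by
    rw [← hab, hpc, hceq]
  have h4 : (q * Nat.card (↑A * (x • ↑B) : Set G)) * m = Nat.card G * m := by
    rw [← h3]; ring
  exact Nat.eq_of_mul_eq_mul_right hm0 h4

private lemma forcedUB' (A B : Subgroup G) (x : G) (m q : ℕ)
    (hdvd : m ∣ (A ⊓ stabilizer G ((QuotientGroup.mk x) : G ⧸ B)).index)
    (hab : A.index * B.index = m * q)
    (hub : q * Nat.card (↑A * (x • ↑B) : Set G) ≤ Nat.card G) :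
    (A ⊓ stabilizer G ((QuotientGroup.mk x) : G ⧸ B)).index = m ∧
      q * Nat.card (↑A * (x • ↑B) : Set G) = Nat.card G := by
  set S := stabilizer G ((QuotientGroup.mk x) : G ⧸ B)
  have hpc := prodCard' A B x
  have hc0 : (A ⊓ S).index ≠ 0 := Subgroup.index_ne_zero_of_finite
  have hn : 0 < Nat.card G := Nat.card_pos
  have hm0 : 0 < m := Nat.pos_of_ne_zero (by rintro rfl; simp at hdvd; exact hc0 hdvd)
  rcases hdvd with ⟨k, hk⟩
  have h3 : Nat.card (↑A * (x • ↑B) : Set G) * (m * q) = Nat.card G * (m * k) := by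
    rw [← hab, hpc, hk]
  have h4 : (q * Nat.card (↑A * (x • ↑B) : Set G)) * m = (Nat.card G * k) * m := by
    rw [show (q * Nat.card (↑A * (x • ↑B) : Set G)) * m
        = Nat.card (↑A * (x • ↑B) : Set G) * (m * q) by ring,
      show (Nat.card G * k) * m = Nat.card G * (m * k) by ring]
    exact h3
  have h5 : q * Nat.card (↑A * (x • ↑B) : Set G) = Nat.card G * k :=
    Nat.eq_of_mul_eq_mul_right hm0 h4
  have hk1 : k = 1 := by
    have hk0 : k ≠ 0 := by rintro rfl; rw [hk] at hc0; simp at hc0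
    have hle : Nat.card G * k ≤ Nat.card G := h5 ▸ hub
    nlinarith [Nat.pos_of_ne_zero hk0]
  constructor
  · rw [hk, hk1, mul_one]
  · rw [h5, hk1, mul_one]

private lemma stab_one' (B : Subgroup G) :
    stabilizer G ((QuotientGroup.mk 1) : G ⧸ B) = B := by
  simpa using stabilizer_quotient B

private lemma forced1' (A B : Subgroup G) (y : G) (m q : ℕ)
    (hy : y ∉ (↑A * ↑B : Set G))
    (hdvd : m ∣ (A ⊓ B).index)
    (hab : A.index * B.index = m * q) (hq : q ≤ 2) :
    (A ⊓ B).index = m ∧ q * Nat.card (↑A * ↑B : Set G) = Nat.card G := by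
  have h1 : ((1:G) • (B : Set G)) = ↑B := one_smul _ _
  have := forced' A B 1 y m q (by rw [h1]; exact hy) (by rw [stab_one']; exact hdvd) hab hq
  rw [stab_one', h1] at this
  exact this

private lemma forcedUB1' (A B : Subgroup G) (m q : ℕ)
    (hdvd : m ∣ (A ⊓ B).index)
    (hab : A.index * B.index = m * q)
    (hub : q * Nat.card (↑A * ↑B : Set G) ≤ Nat.card G) :
    (A ⊓ B).index = m ∧ q * Nat.card (↑A * ↑B : Set G) = Nat.card G := by
  have h1 : ((1:G) • (B : Set G)) = ↑B := one_smul _ _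
  have := forcedUB' A B 1 m q (by rw [stab_one']; exact hdvd) hab (by rw [h1]; exact hub)
  rw [stab_one', h1] at this
  exact this

private lemma not_mem_prod_of_disjoint' {A B : Subgroup G} {g h : G}
    (hd : Disjoint (g • (A : Set G)) (h • (B : Set G))) : g⁻¹ * h ∉ (↑A * ↑B : Set G) := by
  rintro ⟨u, hu, v, hv, huv⟩
  simp only at huv
  have h1 : g * u ∈ g • (A : Set G) := ⟨u, hu, rfl⟩
  have h2 : g * u ∈ h • (B : Set G) := ⟨v⁻¹, inv_mem hv, by
    show h * v⁻¹ = g * u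
    have : g * (u * v) = h := by rw [huv]; group
    rw [← this]; group⟩
  exact (Set.disjoint_left.mp hd h1) h2

private lemma dvd_helper' {d rA rB c : ℕ} (hd : 0 < d) (hA : d * rA ∣ c) (hB : d * rB ∣ c)
    (hcop : Nat.Coprime rB rA) : d * (rA * rB) ∣ c := by
  obtain ⟨s, hs⟩ := hA
  have h1 : d * rB ∣ d * (rA * s) := by
    rw [show d * (rA * s) = d * rA * s by ring, ← hs]; exact hB
  have h2 : rB ∣ rA * s := (mul_dvd_mul_iff_left (by omega : d ≠ 0)).mp h1
  have h3 : rB ∣ s := hcop.dvd_of_dvd_mul_left h2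
  obtain ⟨t, rfl⟩ := h3
  exact ⟨t, by rw [hs]; ring⟩

/-- The core contradiction: if `U₁U₂ = U₁U₃` are half-sized and `U₃U₂` is at least
half-sized, then the three pairwise disjointness conditions are contradictory. -/
private lemma coreContra' (U₁ U₂ U₃ : Subgroup G) (a b : G)
    (ha : a ∉ ((U₁ : Set G) * (U₂ : Set G)))
    (hb : b ∉ ((U₁ : Set G) * (U₃ : Set G)))
    (hba : b⁻¹ * a ∉ ((U₃ : Set G) * (U₂ : Set G)))
    (hE : ((U₁ : Set G) * (U₂ : Set G)) = ((U₁ : Set G) * (U₃ : Set G)))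
    (h2 : 2 * Nat.card ((U₁ : Set G) * (U₂ : Set G) : Set G) = Nat.card G)
    (hSlb : Nat.card G ≤ 2 * Nat.card ((U₃ : Set G) * (U₂ : Set G) : Set G)) : False := by
  classical
  set E : Set G := (U₁ : Set G) * (U₂ : Set G) with hEdef
  set S : Set G := b • ((U₃ : Set G) * (U₂ : Set G)) with hSdef
  have hn : 0 < Nat.card G := Nat.card_pos
  have haS : a ∉ S := by
    rintro ⟨z, hz, hzz⟩
    apply hba
    have hz2 : b⁻¹ * a = z := by rw [← hzz]; show b⁻¹ * (b * z) = z; group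
    exact hz2 ▸ hz
  have hnotU : a ∉ E ∪ S := by
    intro h
    rcases h with h | h
    · exact ha h
    · exact haS h
  have hsub : E ∪ S ⊆ Set.univ \ {a} := fun y hy =>
    ⟨Set.mem_univ y, fun hy' => hnotU (by rwa [Set.mem_singleton_iff.mp hy'] at hy)⟩
  have hle : (E ∪ S).ncard ≤ Nat.card G - 1 := by
    calc (E ∪ S).ncard ≤ (Set.univ \ {a} : Set G).ncard :=
          Set.ncard_le_ncard hsub (Set.toFinite _)
      _ = (Set.univ : Set G).ncard - 1 :=
          Set.ncard_diff_singleton_of_mem (Set.mem_univ a)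
      _ = Nat.card G - 1 := by rw [Set.ncard_univ]
  have hui : (E ∪ S).ncard + (E ∩ S).ncard = E.ncard + S.ncard :=
    Set.ncard_union_add_ncard_inter E S (Set.toFinite _) (Set.toFinite _)
  have hScard : S.ncard = ((U₃ : Set G) * (U₂ : Set G)).ncard := Set.ncard_smul_set b _
  have hEc : 2 * E.ncard = Nat.card G := by
    rw [← Nat.card_coe_set_eq]; exact h2
  have hS2 : Nat.card G ≤ 2 * S.ncard := by
    rw [hScard, ← Nat.card_coe_set_eq]; exact hSlb
  have hpos : (E ∩ S).ncard ≠ 0 := by omega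
  obtain ⟨y, hyE, hyS⟩ := Set.nonempty_of_ncard_ne_zero hpos
  obtain ⟨u₁, hu₁, u₂, hu₂, hy1⟩ := hyE
  obtain ⟨z, hz, hy2⟩ := hyS
  obtain ⟨u₃, hu₃, u₂', hu₂', hz2⟩ := hz
  simp only at hy1 hz2
  have hmem : u₁ * (u₂ * u₂'⁻¹) ∈ E :=
    Set.mul_mem_mul hu₁ (by
      have h1 : u₂ ∈ U₂ := hu₂
      have h2 : u₂' ∈ U₂ := hu₂'
      exact (SetLike.mem_coe).mpr (mul_mem h1 (inv_mem h2)))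
  rw [hE] at hmem
  obtain ⟨v₁, hv₁, v₃, hv₃, hv⟩ := hmem
  simp only at hv
  apply hb
  have hbeq : b = v₁ * (v₃ * u₃⁻¹) := by
    have hy2' : b * z = y := hy2
    rw [← hz2, ← hy1] at hy2'
    -- b * (u₃ * u₂') = u₁ * u₂
    have hb1 : b = u₁ * u₂ * u₂'⁻¹ * u₃⁻¹ := by rw [← hy2']; group
    rw [hb1, show u₁ * u₂ * u₂'⁻¹ * u₃⁻¹ = (u₁ * (u₂ * u₂'⁻¹)) * u₃⁻¹ by group, ← hv]
    group
  rw [hbeq]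
  exact Set.mul_mem_mul hv₁ ((SetLike.mem_coe).mpr (mul_mem hv₃ (inv_mem hu₃)))

end Aux
section MainProof

open MulAction

set_option maxHeartbeats 4000000 in
theorem harmonic_244_alpha_restrictions
    (G : Type*) [Group G] [Fintype G] (U₁ U₂ U₃ : Subgroup G)
    (r₁ r₂ r₃ : ℕ) (hr₁ : 0 < r₁) (hr₂ : 0 < r₂) (hr₃ : 0 < r₃)
    (h12 : Nat.Coprime r₁ r₂) (h13 : Nat.Coprime r₁ r₃) (h23 : Nat.Coprime r₂ r₃)
    (hodd : Odd r₁)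
    (hU₁ : U₁.index = 2 * r₁) (hU₂ : U₂.index = 4 * r₂) (hU₃ : U₃.index = 4 * r₃)
    (hharm : ∃ g₁ g₂ g₃ : G,
      Disjoint (g₁ • (U₁ : Set G)) (g₂ • (U₂ : Set G)) ∧
      Disjoint (g₁ • (U₁ : Set G)) (g₃ • (U₃ : Set G)) ∧
      Disjoint (g₂ • (U₂ : Set G)) (g₃ • (U₃ : Set G))) :
    alphaIdx U₂ U₃ ≠ 2 ∧
    (alphaIdx U₂ U₃ = 3 → 3 ∣ r₁ ∧
      Nat.card ((U₂ : Set G) * ((U₁ ⊓ U₃ : Subgroup G) : Set G) : Set G) =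
        Fintype.card G / 4 ∧
      Nat.card
        ((((U₂ : Set G) * (U₁ : Set G)) ∩ ((U₂ : Set G) * (U₃ : Set G))) : Set G) =
        Fintype.card G / 4) := by
  classical
  obtain ⟨g₁, g₂, g₃, hd12, hd13, hd23⟩ := hharm
  set a : G := g₁⁻¹ * g₂ with hadef
  set b : G := g₁⁻¹ * g₃ with hbdef
  have ha : a ∉ ((U₁ : Set G) * (U₂ : Set G)) := not_mem_prod_of_disjoint' hd12
  have hb : b ∉ ((U₁ : Set G) * (U₃ : Set G)) := not_mem_prod_of_disjoint' hd13
  have hwX : a⁻¹ * b ∉ ((U₂ : Set G) * (U₃ : Set G)) := by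
    have h0 : a⁻¹ * b = g₂⁻¹ * g₃ := by rw [hadef, hbdef]; group
    rw [h0]; exact not_mem_prod_of_disjoint' hd23
  have hba : b⁻¹ * a ∉ ((U₃ : Set G) * (U₂ : Set G)) := by
    rintro ⟨u, hu, v, hv, huv⟩
    simp only at huv
    apply hwX
    have h1 : a⁻¹ * b = v⁻¹ * u⁻¹ := by
      rw [show v⁻¹ * u⁻¹ = (u * v)⁻¹ by group, huv]; group
    rw [h1]
    exact Set.mul_mem_mul (SetLike.mem_coe.mpr (inv_mem (SetLike.mem_coe.mp hv)))
      (SetLike.mem_coe.mpr (inv_mem (SetLike.mem_coe.mp hu)))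
  have hn : 0 < Nat.card G := Nat.card_pos
  -- coprimality helpers
  have cop2 : Nat.Coprime r₁ 2 := Nat.coprime_two_right.mpr hodd
  have cop_2r₂_r₁ : Nat.Coprime (2 * r₂) r₁ := Nat.Coprime.mul cop2.symm h12.symm
  have cop_2r₃_r₁ : Nat.Coprime (2 * r₃) r₁ := Nat.Coprime.mul cop2.symm h13.symm
  have copr₂r₃_r₁ : Nat.Coprime (r₂ * r₃) r₁ := Nat.Coprime.mul h12.symm h13.symm
  have cop_4r₂r₃_r₁ : Nat.Coprime (4 * (r₂ * r₃)) r₁ := by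
    have c4 : Nat.Coprime 4 r₁ := by
      have := Nat.Coprime.mul cop2.symm cop2.symm
      norm_num at this
      exact this
    exact Nat.Coprime.mul c4 copr₂r₃_r₁
  -- lcm and decode of alphaIdx
  have hdvd23 : 4 * (r₂ * r₃) ∣ (U₂ ⊓ U₃).index :=
    dvd_helper' (by norm_num) (hU₂ ▸ Subgroup.index_dvd_of_le inf_le_left)
      (hU₃ ▸ Subgroup.index_dvd_of_le inf_le_right) h23.symm
  have hlcm : Nat.lcm U₂.index U₃.index = 4 * (r₂ * r₃) := by
    rw [hU₂, hU₃, Nat.lcm_mul_left, h23.lcm_eq_mul]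
  have hdecode : ∀ k : ℕ, alphaIdx U₂ U₃ = k → (U₂ ⊓ U₃).index = 4 * (r₂ * r₃) * k := by
    intro k hk
    obtain ⟨t, ht⟩ := hdvd23
    have h4rpos : 0 < 4 * (r₂ * r₃) := by positivity
    have h0 : alphaIdx U₂ U₃ = (U₂ ⊓ U₃).index / Nat.lcm U₂.index U₃.index := rfl
    rw [h0, hlcm, ht, Nat.mul_div_cancel_left t h4rpos] at hk
    rw [ht, hk]
  -- pair (U₁,U₂)
  have hdvd12 : 2 * (r₁ * (2 * r₂)) ∣ (U₁ ⊓ U₂).index :=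
    dvd_helper' (by norm_num) (hU₁ ▸ Subgroup.index_dvd_of_le inf_le_left)
      (by rw [show 2 * (2 * r₂) = 4 * r₂ by ring]
          exact hU₂ ▸ Subgroup.index_dvd_of_le inf_le_right) cop_2r₂_r₁
  obtain ⟨i12, s12⟩ := forced1' U₁ U₂ a _ _ ha hdvd12 (by rw [hU₁, hU₂]; ring) (le_refl 2)
  -- pair (U₁,U₃)
  have hdvd13 : 2 * (r₁ * (2 * r₃)) ∣ (U₁ ⊓ U₃).index :=
    dvd_helper' (by norm_num) (hU₁ ▸ Subgroup.index_dvd_of_le inf_le_left)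
      (by rw [show 2 * (2 * r₃) = 4 * r₃ by ring]
          exact hU₃ ▸ Subgroup.index_dvd_of_le inf_le_right) cop_2r₃_r₁
  obtain ⟨i13, s13⟩ := forced1' U₁ U₃ b _ _ hb hdvd13 (by rw [hU₁, hU₃]; ring) (le_refl 2)
  -- membership of a in U₁ * (U₂ ⊓ U₃) would land in U₁U₂
  have haD : a ∉ ((U₁ : Set G) * ((U₂ ⊓ U₃ : Subgroup G) : Set G)) := by
    intro hmem
    exact ha (Set.mul_subset_mul_left
      (by rw [Subgroup.coe_inf]; exact Set.inter_subset_left) hmem)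
  -- the "collapse + contradiction" engine, for c₂₃ = 4r₂r₃k, given suitable coprimality
  -- Part 1: alphaIdx ≠ 2
  have part1 : alphaIdx U₂ U₃ ≠ 2 := by
    intro hk
    have hc23 : (U₂ ⊓ U₃).index = 4 * (r₂ * r₃) * 2 := hdecode 2 hk
    have hdvdD : 2 * (r₁ * (4 * (r₂ * r₃))) ∣ (U₁ ⊓ (U₂ ⊓ U₃)).index :=
      dvd_helper' (by norm_num) (hU₁ ▸ Subgroup.index_dvd_of_le inf_le_left)
        (by rw [show 2 * (4 * (r₂ * r₃)) = 4 * (r₂ * r₃) * 2 by ring]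
            exact hc23 ▸ Subgroup.index_dvd_of_le inf_le_right) cop_4r₂r₃_r₁
    obtain ⟨iD, sD⟩ := forced1' U₁ (U₂ ⊓ U₃) a _ _ haD hdvdD
      (by rw [hU₁, hc23]; ring) (le_refl 2)
    -- collapse : U₁U₂ = U₁(U₂⊓U₃) = U₁U₃
    have hsub2 : ((U₁ : Set G) * ((U₂ ⊓ U₃ : Subgroup G) : Set G)) ⊆ (U₁ : Set G) * U₂ :=
      Set.mul_subset_mul_left (by rw [Subgroup.coe_inf]; exact Set.inter_subset_left)
    have hsub3 : ((U₁ : Set G) * ((U₂ ⊓ U₃ : Subgroup G) : Set G)) ⊆ (U₁ : Set G) * U₃ :=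
      Set.mul_subset_mul_left (by rw [Subgroup.coe_inf]; exact Set.inter_subset_right)
    have e2 : ((U₁ : Set G) * ((U₂ ⊓ U₃ : Subgroup G) : Set G)) = (U₁ : Set G) * U₂ :=
      Set.eq_of_subset_of_ncard_le hsub2
        (by rw [← Nat.card_coe_set_eq, ← Nat.card_coe_set_eq]; omega)
        (Set.toFinite _)
    have e3 : ((U₁ : Set G) * ((U₂ ⊓ U₃ : Subgroup G) : Set G)) = (U₁ : Set G) * U₃ :=
      Set.eq_of_subset_of_ncard_le hsub3
        (by rw [← Nat.card_coe_set_eq, ← Nat.card_coe_set_eq]; omega)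
        (Set.toFinite _)
    have hE : ((U₁ : Set G) * (U₂ : Set G)) = (U₁ : Set G) * U₃ := by rw [← e2, e3]
    -- size of U₃U₂
    have i23' : (U₃ ⊓ U₂).index = 4 * (r₂ * r₃) * 2 := by rw [inf_comm]; exact hc23
    have hSsize : 2 * Nat.card ((U₃ : Set G) * (U₂ : Set G) : Set G) = Nat.card G := by
      have hpc := prodCard1' U₃ U₂
      rw [hU₂, hU₃, i23'] at hpc
      apply Nat.eq_of_mul_eq_mul_right (show 0 < 8 * (r₂ * r₃) by positivity)
      calc 2 * Nat.card ((U₃ : Set G) * (U₂ : Set G) : Set G) * (8 * (r₂ * r₃))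
          = Nat.card ((U₃ : Set G) * (U₂ : Set G) : Set G) * (4 * r₃ * (4 * r₂)) := by ring
        _ = Nat.card G * (4 * (r₂ * r₃) * 2) := hpc
        _ = Nat.card G * (8 * (r₂ * r₃)) := by ring
    exact coreContra' U₁ U₂ U₃ a b ha hb hba hE s12 (le_of_eq hSsize.symm)
  refine ⟨part1, ?_⟩
  -- Part 2
  intro hk3
  have hc23 : (U₂ ⊓ U₃).index = 4 * (r₂ * r₃) * 3 := hdecode 3 hk3
  have h3r₁ : 3 ∣ r₁ := by
    by_contra h3
    have cop3 : Nat.Coprime 3 r₁ := (Nat.Prime.coprime_iff_not_dvd (by norm_num)).mpr h3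
    have cop6 : Nat.Coprime (6 * (r₂ * r₃)) r₁ := by
      have c6 : Nat.Coprime 6 r₁ := by
        have := Nat.Coprime.mul cop2.symm cop3
        norm_num at this
        exact this
      exact Nat.Coprime.mul c6 copr₂r₃_r₁
    have hdvdD : 2 * (r₁ * (6 * (r₂ * r₃))) ∣ (U₁ ⊓ (U₂ ⊓ U₃)).index :=
      dvd_helper' (by norm_num) (hU₁ ▸ Subgroup.index_dvd_of_le inf_le_left)
        (by rw [show 2 * (6 * (r₂ * r₃)) = 4 * (r₂ * r₃) * 3 by ring]
            exact hc23 ▸ Subgroup.index_dvd_of_le inf_le_right) cop6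
    obtain ⟨iD, sD⟩ := forced1' U₁ (U₂ ⊓ U₃) a _ _ haD hdvdD
      (by rw [hU₁, hc23]; ring) (le_refl 2)
    have hsub2 : ((U₁ : Set G) * ((U₂ ⊓ U₃ : Subgroup G) : Set G)) ⊆ (U₁ : Set G) * U₂ :=
      Set.mul_subset_mul_left (by rw [Subgroup.coe_inf]; exact Set.inter_subset_left)
    have hsub3 : ((U₁ : Set G) * ((U₂ ⊓ U₃ : Subgroup G) : Set G)) ⊆ (U₁ : Set G) * U₃ :=
      Set.mul_subset_mul_left (by rw [Subgroup.coe_inf]; exact Set.inter_subset_right)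
    have e2 : ((U₁ : Set G) * ((U₂ ⊓ U₃ : Subgroup G) : Set G)) = (U₁ : Set G) * U₂ :=
      Set.eq_of_subset_of_ncard_le hsub2
        (by rw [← Nat.card_coe_set_eq, ← Nat.card_coe_set_eq]; omega)
        (Set.toFinite _)
    have e3 : ((U₁ : Set G) * ((U₂ ⊓ U₃ : Subgroup G) : Set G)) = (U₁ : Set G) * U₃ :=
      Set.eq_of_subset_of_ncard_le hsub3
        (by rw [← Nat.card_coe_set_eq, ← Nat.card_coe_set_eq]; omega)
        (Set.toFinite _)
    have hE : ((U₁ : Set G) * (U₂ : Set G)) = (U₁ : Set G) * U₃ := by rw [← e2, e3]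
    have i23' : (U₃ ⊓ U₂).index = 4 * (r₂ * r₃) * 3 := by rw [inf_comm]; exact hc23
    have hSsize : 4 * Nat.card ((U₃ : Set G) * (U₂ : Set G) : Set G) = 3 * Nat.card G := by
      have hpc := prodCard1' U₃ U₂
      rw [hU₂, hU₃, i23'] at hpc
      apply Nat.eq_of_mul_eq_mul_right (show 0 < 4 * (r₂ * r₃) by positivity)
      calc 4 * Nat.card ((U₃ : Set G) * (U₂ : Set G) : Set G) * (4 * (r₂ * r₃))
          = Nat.card ((U₃ : Set G) * (U₂ : Set G) : Set G) * (4 * r₃ * (4 * r₂)) := by ring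
        _ = Nat.card G * (4 * (r₂ * r₃) * 3) := hpc
        _ = 3 * Nat.card G * (4 * (r₂ * r₃)) := by ring
    exact coreContra' U₁ U₂ U₃ a b ha hb hba hE s12 (by omega)
  -- Now the size computations for α = 3.
  -- |U₂U₁| = n/2
  have i21 : (U₂ ⊓ U₁).index = 2 * (r₁ * (2 * r₂)) := by rw [inf_comm]; exact i12
  have s21 : 2 * Nat.card ((U₂ : Set G) * (U₁ : Set G) : Set G) = Nat.card G := by
    have hpc := prodCard1' U₂ U₁
    rw [hU₁, hU₂, i21] at hpc
    apply Nat.eq_of_mul_eq_mul_right (show 0 < 4 * (r₁ * r₂) by positivity)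
    calc 2 * Nat.card ((U₂ : Set G) * (U₁ : Set G) : Set G) * (4 * (r₁ * r₂))
        = Nat.card ((U₂ : Set G) * (U₁ : Set G) : Set G) * (4 * r₂ * (2 * r₁)) := by ring
      _ = Nat.card G * (2 * (r₁ * (2 * r₂))) := hpc
      _ = Nat.card G * (4 * (r₁ * r₂)) := by ring
  -- |U₂U₃| = 3n/4
  have s23 : 4 * Nat.card ((U₂ : Set G) * (U₃ : Set G) : Set G) = 3 * Nat.card G := by
    have hpc := prodCard1' U₂ U₃
    rw [hU₂, hU₃, hc23] at hpc
    apply Nat.eq_of_mul_eq_mul_right (show 0 < 4 * (r₂ * r₃) by positivity)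
    calc 4 * Nat.card ((U₂ : Set G) * (U₃ : Set G) : Set G) * (4 * (r₂ * r₃))
        = Nat.card ((U₂ : Set G) * (U₃ : Set G) : Set G) * (4 * r₂ * (4 * r₃)) := by ring
      _ = Nat.card G * (4 * (r₂ * r₃) * 3) := hpc
      _ = 3 * Nat.card G * (4 * (r₂ * r₃)) := by ring
  -- X := U₂ * (w • U₃) is the complementary (U₂,U₃)-double coset
  set w : G := a⁻¹ * b with hwdef
  have hdisjX : Disjoint ((U₂ : Set G) * (U₃ : Set G))
      ((U₂ : Set G) * (w • (U₃ : Set G))) := by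
    rw [Set.disjoint_left]
    rintro z ⟨u, hu, v, hv, hz1⟩ ⟨u', hu', t, ht, hz2⟩
    obtain ⟨v', hv', ht'⟩ := ht
    simp only [smul_eq_mul] at hz1 hz2 ht'
    apply hwX
    have heq : u * v = u' * (w * v') := by rw [ht', hz2]; exact hz1
    have hwval : w = (u'⁻¹ * u) * (v * v'⁻¹) := by
      calc w = u'⁻¹ * (u' * (w * v')) * v'⁻¹ := by group
        _ = u'⁻¹ * (u * v) * v'⁻¹ := by rw [← heq]
        _ = (u'⁻¹ * u) * (v * v'⁻¹) := by group
    rw [hwval]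
    exact Set.mul_mem_mul
      (SetLike.mem_coe.mpr (mul_mem (inv_mem (SetLike.mem_coe.mp hu')) (SetLike.mem_coe.mp hu)))
      (SetLike.mem_coe.mpr (mul_mem (SetLike.mem_coe.mp hv) (inv_mem (SetLike.mem_coe.mp hv'))))
  have hubX : 4 * Nat.card ((U₂ : Set G) * (w • (U₃ : Set G)) : Set G) ≤ Nat.card G := by
    have hun : (((U₂ : Set G) * (U₃ : Set G)) ∪ ((U₂ : Set G) * (w • (U₃ : Set G)))).ncard
        = ((U₂ : Set G) * (U₃ : Set G)).ncard + ((U₂ : Set G) * (w • (U₃ : Set G))).ncard :=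
      Set.ncard_union_eq hdisjX (Set.toFinite _) (Set.toFinite _)
    have hle : (((U₂ : Set G) * (U₃ : Set G)) ∪ ((U₂ : Set G) * (w • (U₃ : Set G)))).ncard
        ≤ Nat.card G := by
      rw [← Set.ncard_univ G]
      exact Set.ncard_le_ncard (Set.subset_univ _) Set.finite_univ
    have e1 : ((U₂ : Set G) * (U₃ : Set G)).ncard
        = Nat.card ((U₂ : Set G) * (U₃ : Set G) : Set G) := (Nat.card_coe_set_eq _).symm
    have e2 : ((U₂ : Set G) * (w • (U₃ : Set G))).ncard
        = Nat.card ((U₂ : Set G) * (w • (U₃ : Set G)) : Set G) := (Nat.card_coe_set_eq _).symm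
    omega
  have hstabX : (stabilizer G ((QuotientGroup.mk w) : G ⧸ U₃)).index = 4 * r₃ := by
    rw [stab_index', hU₃]
  have hdvdX : 4 * (r₂ * r₃)
      ∣ (U₂ ⊓ stabilizer G ((QuotientGroup.mk w) : G ⧸ U₃)).index :=
    dvd_helper' (by norm_num) (hU₂ ▸ Subgroup.index_dvd_of_le inf_le_left)
      (hstabX ▸ Subgroup.index_dvd_of_le inf_le_right) h23.symm
  obtain ⟨_, sX⟩ := forcedUB' U₂ U₃ w (4 * (r₂ * r₃)) 4 hdvdX (by rw [hU₂, hU₃]; ring) hubX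
  have hXunion : ((U₂ : Set G) * (U₃ : Set G)) ∪ ((U₂ : Set G) * (w • (U₃ : Set G)))
      = Set.univ := by
    apply Set.eq_of_subset_of_ncard_le (Set.subset_univ _) ?_ (Set.toFinite _)
    rw [Set.ncard_univ]
    have hun : (((U₂ : Set G) * (U₃ : Set G)) ∪ ((U₂ : Set G) * (w • (U₃ : Set G)))).ncard
        = ((U₂ : Set G) * (U₃ : Set G)).ncard + ((U₂ : Set G) * (w • (U₃ : Set G))).ncard :=
      Set.ncard_union_eq hdisjX (Set.toFinite _) (Set.toFinite _)
    have e1 : ((U₂ : Set G) * (U₃ : Set G)).ncard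
        = Nat.card ((U₂ : Set G) * (U₃ : Set G) : Set G) := (Nat.card_coe_set_eq _).symm
    have e2 : ((U₂ : Set G) * (w • (U₃ : Set G))).ncard
        = Nat.card ((U₂ : Set G) * (w • (U₃ : Set G)) : Set G) := (Nat.card_coe_set_eq _).symm
    omega
  -- X₁ := U₂ * (a⁻¹ • U₁) is the complementary (U₂,U₁)-double coset
  have hdisjX₁ : Disjoint ((U₂ : Set G) * (U₁ : Set G))
      ((U₂ : Set G) * (a⁻¹ • (U₁ : Set G))) := by
    rw [Set.disjoint_left]
    rintro z ⟨u, hu, v, hv, hz1⟩ ⟨u', hu', t, ht, hz2⟩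
    obtain ⟨v', hv', ht'⟩ := ht
    simp only [smul_eq_mul] at hz1 hz2 ht'
    apply ha
    have heq : u * v = u' * (a⁻¹ * v') := by rw [ht', hz2]; exact hz1
    have h7 : a⁻¹ * v' = u'⁻¹ * (u * v) := by rw [heq]; group
    have haval : a = (v' * v⁻¹) * (u⁻¹ * u') := by
      calc a = v' * (a⁻¹ * v')⁻¹ := by group
        _ = v' * (u'⁻¹ * (u * v))⁻¹ := by rw [h7]
        _ = (v' * v⁻¹) * (u⁻¹ * u') := by group
    rw [haval]
    exact Set.mul_mem_mul
      (SetLike.mem_coe.mpr (mul_mem (SetLike.mem_coe.mp hv') (inv_mem (SetLike.mem_coe.mp hv))))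
      (SetLike.mem_coe.mpr (mul_mem (inv_mem (SetLike.mem_coe.mp hu)) (SetLike.mem_coe.mp hu')))
  have hubX₁ : 2 * Nat.card ((U₂ : Set G) * (a⁻¹ • (U₁ : Set G)) : Set G) ≤ Nat.card G := by
    have hun : (((U₂ : Set G) * (U₁ : Set G)) ∪ ((U₂ : Set G) * (a⁻¹ • (U₁ : Set G)))).ncard
        = ((U₂ : Set G) * (U₁ : Set G)).ncard + ((U₂ : Set G) * (a⁻¹ • (U₁ : Set G))).ncard :=
      Set.ncard_union_eq hdisjX₁ (Set.toFinite _) (Set.toFinite _)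
    have hle : (((U₂ : Set G) * (U₁ : Set G)) ∪ ((U₂ : Set G) * (a⁻¹ • (U₁ : Set G)))).ncard
        ≤ Nat.card G := by
      rw [← Set.ncard_univ G]
      exact Set.ncard_le_ncard (Set.subset_univ _) Set.finite_univ
    have e1 : ((U₂ : Set G) * (U₁ : Set G)).ncard
        = Nat.card ((U₂ : Set G) * (U₁ : Set G) : Set G) := (Nat.card_coe_set_eq _).symm
    have e2 : ((U₂ : Set G) * (a⁻¹ • (U₁ : Set G))).ncard
        = Nat.card ((U₂ : Set G) * (a⁻¹ • (U₁ : Set G)) : Set G) :=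
      (Nat.card_coe_set_eq _).symm
    omega
  have hstabX₁ : (stabilizer G ((QuotientGroup.mk a⁻¹) : G ⧸ U₁)).index = 2 * r₁ := by
    rw [stab_index', hU₁]
  have hdvdX₁ : 2 * (r₁ * (2 * r₂))
      ∣ (U₂ ⊓ stabilizer G ((QuotientGroup.mk a⁻¹) : G ⧸ U₁)).index :=
    dvd_helper' (by norm_num) (hstabX₁ ▸ Subgroup.index_dvd_of_le inf_le_right)
      (by rw [show 2 * (2 * r₂) = 4 * r₂ by ring]
          exact hU₂ ▸ Subgroup.index_dvd_of_le inf_le_left) cop_2r₂_r₁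
  obtain ⟨_, sX₁⟩ := forcedUB' U₂ U₁ a⁻¹ (2 * (r₁ * (2 * r₂))) 2 hdvdX₁
    (by rw [hU₁, hU₂]; ring) hubX₁
  have hX₁union : ((U₂ : Set G) * (U₁ : Set G)) ∪ ((U₂ : Set G) * (a⁻¹ • (U₁ : Set G)))
      = Set.univ := by
    apply Set.eq_of_subset_of_ncard_le (Set.subset_univ _) ?_ (Set.toFinite _)
    rw [Set.ncard_univ]
    have hun : (((U₂ : Set G) * (U₁ : Set G)) ∪ ((U₂ : Set G) * (a⁻¹ • (U₁ : Set G)))).ncard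
        = ((U₂ : Set G) * (U₁ : Set G)).ncard + ((U₂ : Set G) * (a⁻¹ • (U₁ : Set G))).ncard :=
      Set.ncard_union_eq hdisjX₁ (Set.toFinite _) (Set.toFinite _)
    have e1 : ((U₂ : Set G) * (U₁ : Set G)).ncard
        = Nat.card ((U₂ : Set G) * (U₁ : Set G) : Set G) := (Nat.card_coe_set_eq _).symm
    have e2 : ((U₂ : Set G) * (a⁻¹ • (U₁ : Set G))).ncard
        = Nat.card ((U₂ : Set G) * (a⁻¹ • (U₁ : Set G)) : Set G) :=
      (Nat.card_coe_set_eq _).symm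
    omega
  -- V := aU₂a⁻¹ as the stabilizer of aU₂ ∈ G/U₂
  set V : Subgroup G := stabilizer G ((QuotientGroup.mk a) : G ⧸ U₂) with hVdef
  have hVmem : ∀ v : G, v ∈ V ↔ a⁻¹ * v * a ∈ U₂ := by
    intro v
    rw [hVdef, MulAction.mem_stabilizer_iff]
    have h8 : v • ((QuotientGroup.mk a) : G ⧸ U₂) = QuotientGroup.mk (v * a) := rfl
    rw [h8, QuotientGroup.eq]
    constructor
    · intro h
      have h9 : a⁻¹ * v * a = ((v * a)⁻¹ * a)⁻¹ := by group
      rw [h9]; exact inv_mem h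
    · intro h
      have h9 : (v * a)⁻¹ * a = (a⁻¹ * v * a)⁻¹ := by group
      rw [h9]; exact inv_mem h
  have hVindex : V.index = 4 * r₂ := by rw [hVdef, stab_index', hU₂]
  have haV : a ∉ ((V : Set G) * (U₁ : Set G)) := by
    rintro ⟨v, hv, u, hu, hvu⟩
    simp only at hvu
    apply ha
    have hv' : a⁻¹ * v * a ∈ U₂ := (hVmem v).mp (SetLike.mem_coe.mp hv)
    have h10 : a⁻¹ * v * a = u⁻¹ * a := by rw [← hvu]; group
    have hu₂ : u⁻¹ * a ∈ U₂ := h10 ▸ hv'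
    exact ⟨u, hu, u⁻¹ * a, SetLike.mem_coe.mpr hu₂, by group⟩
  have hdvdV : 2 * (r₁ * (2 * r₂)) ∣ (V ⊓ U₁).index :=
    dvd_helper' (by norm_num) (hU₁ ▸ Subgroup.index_dvd_of_le inf_le_right)
      (by rw [show 2 * (2 * r₂) = 4 * r₂ by ring]
          exact hVindex ▸ Subgroup.index_dvd_of_le inf_le_left) cop_2r₂_r₁
  obtain ⟨iV, _⟩ := forced1' V U₁ a _ _ haV hdvdV (by rw [hVindex, hU₁]; ring) (le_refl 2)
  -- X' := V * (b • U₃) = a • X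
  set X' : Set G := (V : Set G) * (b • (U₃ : Set G)) with hX'def
  have hX'eq : X' = a • ((U₂ : Set G) * (w • (U₃ : Set G))) := by
    ext z
    constructor
    · rintro ⟨v, hv, t, ht, hz1⟩
      obtain ⟨u₃, hu₃, ht'⟩ := ht
      simp only [smul_eq_mul] at hz1 ht'
      refine ⟨(a⁻¹ * v * a) * (w * u₃),
        Set.mul_mem_mul (SetLike.mem_coe.mpr ((hVmem v).mp (SetLike.mem_coe.mp hv)))
          ⟨u₃, hu₃, rfl⟩, ?_⟩
      show a * ((a⁻¹ * v * a) * (w * u₃)) = z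
      rw [← hz1, ← ht', hwdef]; group
    · rintro ⟨x0, hx0, hz⟩
      obtain ⟨u, hu, t, ht, hx1⟩ := hx0
      obtain ⟨u₃, hu₃, ht'⟩ := ht
      simp only [smul_eq_mul] at hz hx1 ht'
      refine ⟨a * u * a⁻¹,
        SetLike.mem_coe.mpr ((hVmem _).mpr (by
          have h9 : a⁻¹ * (a * u * a⁻¹) * a = u := by group
          rw [h9]; exact SetLike.mem_coe.mp hu)),
        b * u₃, ⟨u₃, hu₃, rfl⟩, ?_⟩
      show (a * u * a⁻¹) * (b * u₃) = z
      rw [← hz, ← hx1, ← ht', hwdef]; group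
  have hX'card : Nat.card (X' : Set G)
      = Nat.card ((U₂ : Set G) * (w • (U₃ : Set G)) : Set G) := by
    rw [Nat.card_coe_set_eq, Nat.card_coe_set_eq, hX'eq, Set.ncard_smul_set]
  -- Y := (V ⊓ U₁) * (b • U₃)
  have hYsub : ((V ⊓ U₁ : Subgroup G) : Set G) * (b • (U₃ : Set G)) ⊆ X' := by
    rw [hX'def]
    exact Set.mul_subset_mul_right (SetLike.coe_subset_coe.mpr inf_le_left)
  have hubY : 4 * Nat.card (((V ⊓ U₁ : Subgroup G) : Set G) * (b • (U₃ : Set G)) : Set G)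
      ≤ Nat.card G := by
    have h1 : (((V ⊓ U₁ : Subgroup G) : Set G) * (b • (U₃ : Set G))).ncard ≤ X'.ncard :=
      Set.ncard_le_ncard hYsub (Set.toFinite _)
    have e1 : (((V ⊓ U₁ : Subgroup G) : Set G) * (b • (U₃ : Set G))).ncard
        = Nat.card (((V ⊓ U₁ : Subgroup G) : Set G) * (b • (U₃ : Set G)) : Set G) :=
      (Nat.card_coe_set_eq _).symm
    have e2 : X'.ncard = Nat.card (X' : Set G) := (Nat.card_coe_set_eq _).symm
    omega
  have hstabY : (stabilizer G ((QuotientGroup.mk b) : G ⧸ U₃)).index = 4 * r₃ := by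
    rw [stab_index', hU₃]
  have hdvdY : 4 * ((r₁ * r₂) * r₃)
      ∣ ((V ⊓ U₁) ⊓ stabilizer G ((QuotientGroup.mk b) : G ⧸ U₃)).index :=
    dvd_helper' (by norm_num)
      (by rw [show 4 * (r₁ * r₂) = 2 * (r₁ * (2 * r₂)) by ring]
          exact iV ▸ Subgroup.index_dvd_of_le inf_le_left)
      (hstabY ▸ Subgroup.index_dvd_of_le inf_le_right)
      (Nat.Coprime.mul_right h13.symm h23.symm)
  obtain ⟨_, sY⟩ := forcedUB' (V ⊓ U₁) U₃ b (4 * ((r₁ * r₂) * r₃)) 4 hdvdY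
    (by rw [iV, hU₃]; ring) hubY
  have hYX' : ((V ⊓ U₁ : Subgroup G) : Set G) * (b • (U₃ : Set G)) = X' :=
    Set.eq_of_subset_of_ncard_le hYsub (by
      have e1 : (((V ⊓ U₁ : Subgroup G) : Set G) * (b • (U₃ : Set G))).ncard
          = Nat.card (((V ⊓ U₁ : Subgroup G) : Set G) * (b • (U₃ : Set G)) : Set G) :=
        (Nat.card_coe_set_eq _).symm
      have e2 : X'.ncard = Nat.card (X' : Set G) := (Nat.card_coe_set_eq _).symm
      omega) (Set.toFinite _)
  have hdisjX' : Disjoint X' ((U₁ : Set G) * (U₃ : Set G)) := by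
    rw [← hYX', Set.disjoint_left]
    rintro z ⟨p, hp, t, ht, hz1⟩ ⟨u₁, hu₁, u₃, hu₃, hz2⟩
    obtain ⟨v₃, hv₃, ht'⟩ := ht
    simp only [smul_eq_mul] at hz1 hz2 ht'
    have hpU₁ : p ∈ U₁ := (Subgroup.mem_inf.mp (SetLike.mem_coe.mp hp)).2
    apply hb
    have heq : p * (b * v₃) = u₁ * u₃ := by rw [ht', hz1, ← hz2]
    have hbe : b = (p⁻¹ * u₁) * (u₃ * v₃⁻¹) := by
      calc b = p⁻¹ * (p * (b * v₃)) * v₃⁻¹ := by group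
        _ = p⁻¹ * (u₁ * u₃) * v₃⁻¹ := by rw [heq]
        _ = (p⁻¹ * u₁) * (u₃ * v₃⁻¹) := by group
    rw [hbe]
    exact Set.mul_mem_mul
      (SetLike.mem_coe.mpr (mul_mem (inv_mem hpU₁) (SetLike.mem_coe.mp hu₁)))
      (SetLike.mem_coe.mpr (mul_mem (SetLike.mem_coe.mp hu₃) (inv_mem (SetLike.mem_coe.mp hv₃))))
  -- The union U₂U₁ ∪ U₂U₃ = G
  have hUnion : ((U₂ : Set G) * (U₁ : Set G)) ∪ ((U₂ : Set G) * (U₃ : Set G)) = Set.univ := by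
    rw [Set.eq_univ_iff_forall]
    intro y
    by_contra hy
    rw [Set.mem_union] at hy
    push_neg at hy
    obtain ⟨hy1, hy2⟩ := hy
    have hyX₁ : y ∈ ((U₂ : Set G) * (a⁻¹ • (U₁ : Set G))) := by
      have h0 : y ∈ ((U₂ : Set G) * (U₁ : Set G)) ∪ ((U₂ : Set G) * (a⁻¹ • (U₁ : Set G))) := by
        rw [hX₁union]; trivial
      rcases h0 with h0 | h0
      · exact absurd h0 hy1
      · exact h0
    have hyX : y ∈ ((U₂ : Set G) * (w • (U₃ : Set G))) := by
      have h0 : y ∈ ((U₂ : Set G) * (U₃ : Set G)) ∪ ((U₂ : Set G) * (w • (U₃ : Set G))) := by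
        rw [hXunion]; trivial
      rcases h0 with h0 | h0
      · exact absurd h0 hy2
      · exact h0
    obtain ⟨u₂, hu₂, t, ht, hy3⟩ := hyX₁
    obtain ⟨u₁, hu₁, ht₁⟩ := ht
    obtain ⟨u₂', hu₂', s, hs, hy4⟩ := hyX
    obtain ⟨u₃, hu₃, hs₁⟩ := hs
    simp only [smul_eq_mul] at hy3 hy4 ht₁ hs₁
    have heq : u₂ * (a⁻¹ * u₁) = u₂' * (w * u₃) := by rw [hs₁, hy4, ht₁]; exact hy3
    have hvV : a * (u₂'⁻¹ * u₂) * a⁻¹ ∈ V := (hVmem _).mpr (by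
      have h9 : a⁻¹ * (a * (u₂'⁻¹ * u₂) * a⁻¹) * a = u₂'⁻¹ * u₂ := by group
      rw [h9]
      exact mul_mem (inv_mem (SetLike.mem_coe.mp hu₂')) (SetLike.mem_coe.mp hu₂))
    have hu₁X' : u₁ ∈ X' := by
      refine ⟨(a * (u₂'⁻¹ * u₂) * a⁻¹)⁻¹, SetLike.mem_coe.mpr (inv_mem hvV),
        b * u₃, ⟨u₃, hu₃, rfl⟩, ?_⟩
      show (a * (u₂'⁻¹ * u₂) * a⁻¹)⁻¹ * (b * u₃) = u₁
      have h5 : b * u₃ = (a * (u₂'⁻¹ * u₂) * a⁻¹) * u₁ := by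
        calc b * u₃ = a * (u₂'⁻¹ * (u₂' * (w * u₃))) := by rw [hwdef]; group
          _ = a * (u₂'⁻¹ * (u₂ * (a⁻¹ * u₁))) := by rw [← heq]
          _ = (a * (u₂'⁻¹ * u₂) * a⁻¹) * u₁ := by group
      rw [h5]; group
    exact Set.disjoint_left.mp hdisjX' hu₁X'
      ⟨u₁, hu₁, 1, SetLike.mem_coe.mpr (one_mem U₃), mul_one u₁⟩
  -- intersection size
  have hIcard : 4 * Nat.card ((((U₂ : Set G) * (U₁ : Set G)) ∩ ((U₂ : Set G) * (U₃ : Set G)))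
      : Set G) = Nat.card G := by
    have hui := Set.ncard_union_add_ncard_inter ((U₂ : Set G) * (U₁ : Set G))
      ((U₂ : Set G) * (U₃ : Set G)) (Set.toFinite _) (Set.toFinite _)
    rw [hUnion, Set.ncard_univ] at hui
    have e1 : ((U₂ : Set G) * (U₁ : Set G)).ncard
        = Nat.card ((U₂ : Set G) * (U₁ : Set G) : Set G) := (Nat.card_coe_set_eq _).symm
    have e2 : ((U₂ : Set G) * (U₃ : Set G)).ncard
        = Nat.card ((U₂ : Set G) * (U₃ : Set G) : Set G) := (Nat.card_coe_set_eq _).symm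
    have e3 : (((U₂ : Set G) * (U₁ : Set G)) ∩ ((U₂ : Set G) * (U₃ : Set G))).ncard
        = Nat.card ((((U₂ : Set G) * (U₁ : Set G)) ∩ ((U₂ : Set G) * (U₃ : Set G))) : Set G) :=
      (Nat.card_coe_set_eq _).symm
    omega
  -- the product U₂ * (U₁ ⊓ U₃)
  have hWsub : ((U₂ : Set G) * ((U₁ ⊓ U₃ : Subgroup G) : Set G))
      ⊆ ((U₂ : Set G) * (U₁ : Set G)) ∩ ((U₂ : Set G) * (U₃ : Set G)) :=
    Set.subset_inter
      (Set.mul_subset_mul_left (by rw [Subgroup.coe_inf]; exact Set.inter_subset_left))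
      (Set.mul_subset_mul_left (by rw [Subgroup.coe_inf]; exact Set.inter_subset_right))
  have hubW : 4 * Nat.card ((U₂ : Set G) * ((U₁ ⊓ U₃ : Subgroup G) : Set G) : Set G)
      ≤ Nat.card G := by
    have h1 : ((U₂ : Set G) * ((U₁ ⊓ U₃ : Subgroup G) : Set G)).ncard
        ≤ (((U₂ : Set G) * (U₁ : Set G)) ∩ ((U₂ : Set G) * (U₃ : Set G))).ncard :=
      Set.ncard_le_ncard hWsub (Set.toFinite _)
    have e1 : ((U₂ : Set G) * ((U₁ ⊓ U₃ : Subgroup G) : Set G)).ncard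
        = Nat.card ((U₂ : Set G) * ((U₁ ⊓ U₃ : Subgroup G) : Set G) : Set G) :=
      (Nat.card_coe_set_eq _).symm
    have e3 : (((U₂ : Set G) * (U₁ : Set G)) ∩ ((U₂ : Set G) * (U₃ : Set G))).ncard
        = Nat.card ((((U₂ : Set G) * (U₁ : Set G)) ∩ ((U₂ : Set G) * (U₃ : Set G))) : Set G) :=
      (Nat.card_coe_set_eq _).symm
    omega
  have hdvdW : 4 * ((r₁ * r₃) * r₂) ∣ (U₂ ⊓ (U₁ ⊓ U₃)).index :=
    dvd_helper' (by norm_num)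
      (by rw [show 4 * (r₁ * r₃) = 2 * (r₁ * (2 * r₃)) by ring]
          exact i13 ▸ Subgroup.index_dvd_of_le inf_le_right)
      (hU₂ ▸ Subgroup.index_dvd_of_le inf_le_left)
      (Nat.Coprime.mul_right h12.symm h23)
  obtain ⟨_, sW⟩ := forcedUB1' U₂ (U₁ ⊓ U₃) (4 * ((r₁ * r₃) * r₂)) 4 hdvdW
    (by rw [hU₂, i13]; ring) hubW
  refine ⟨h3r₁, ?_, ?_⟩
  · rw [← Nat.card_eq_fintype_card]; omega
  · rw [← Nat.card_eq_fintype_card]; omega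

end MainProof
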